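/- Let a ∈ ℝ, h as above (real symmetric, nonvanishing on Re s = a, h(a) > 0), f⁻(s) = h(s) − h(2a−s), and let φ(τ) = arg h(a+iτ) be continuous with φ(0)=0. Then the number N₀'(T) of distinct zeros of f⁻ on the segment {a+iτ : 0 < τ < T} satisfies N₀'(T) ≥ (1/π) φ(T) − 1 for every T > 0. -/

import Mathlib

open Complex

theorem stmt_4 (a : ℝ) (h : ℂ → ℂ) (φ : ℝ → ℝ)
    (hholo : ∀ τ : ℝ, DifferentiableAt ℂ h ((a : ℂ) + τ * I))
    (hreal : ∀ s : ℂ, h (starRingEnd ℂ s) = starRingEnd ℂ (h s))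
    (hne : ∀ τ : ℝ, h ((a : ℂ) + τ * I) ≠ 0)
    (hpos : 0 < (h (a : ℂ)).re)
    (hφc : Continuous φ) (hφ0 : φ 0 = 0)
    (hpolar : ∀ τ : ℝ, h ((a : ℂ) + τ * I) =
      ((‖h ((a : ℂ) + τ * I)‖ : ℝ) : ℂ) * Complex.exp (φ τ * I)) :
    ∀ T : ℝ, 0 < T →
      {τ : ℝ | 0 < τ ∧ τ < T ∧
          h ((a : ℂ) + τ * I) - h (2 * a - ((a : ℂ) + τ * I)) = 0}.Infinite ∨
      (1 / Real.pi) * φ T - 1 ≤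
        (({τ : ℝ | 0 < τ ∧ τ < T ∧
          h ((a : ℂ) + τ * I) - h (2 * a - ((a : ℂ) + τ * I)) = 0}).ncard : ℝ) := by
  intro T hT
  set S := {τ : ℝ | 0 < τ ∧ τ < T ∧
      h ((a : ℂ) + τ * I) - h (2 * a - ((a : ℂ) + τ * I)) = 0} with hSdef
  by_cases hfin : S.Infinite
  · exact Or.inl hfin
  right
  rw [Set.not_infinite] at hfin
  have hπ := Real.pi_pos
  -- membership criterion
  have hmem : ∀ τ : ℝ, 0 < τ → τ < T → (∃ k : ℤ, φ τ = k * Real.pi) → τ ∈ S := by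
    rintro τ h0 h1 ⟨k, hk⟩
    refine ⟨h0, h1, ?_⟩
    have hc : ((2 * a : ℂ) - ((a : ℂ) + τ * I)) = starRingEnd ℂ ((a : ℂ) + τ * I) := by
      apply Complex.ext
      · simp; ring
      · simp
    rw [hc, hreal, Complex.sub_conj]
    have him : (h ((a : ℂ) + τ * I)).im = 0 := by
      rw [hpolar τ, hk]
      simp only [Complex.mul_im, Complex.ofReal_re, Complex.ofReal_im,
        Complex.exp_ofReal_mul_I_im, Complex.exp_ofReal_mul_I_re, Real.sin_int_mul_pi]
      ring
    rw [him]
    simp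
  set m : ℤ := ⌈φ T / Real.pi⌉ - 1 with hm
  have hmr : (m : ℝ) = (⌈φ T / Real.pi⌉ : ℝ) - 1 := by rw [hm]; push_cast; ring
  have hlb : φ T / Real.pi - 1 ≤ (m : ℝ) := by
    have := Int.le_ceil (φ T / Real.pi)
    linarith
  have hub : (m : ℝ) < φ T / Real.pi := by
    have := Int.ceil_lt_add_one (φ T / Real.pi)
    linarith
  have key : (1 / Real.pi) * φ T - 1 ≤ (m : ℝ) := by
    rw [one_div, mul_comm, ← div_eq_mul_inv]
    linarith
  by_cases hm0 : m ≤ 0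
  · have : (m : ℝ) ≤ 0 := by exact_mod_cast hm0
    have : (0:ℝ) ≤ S.ncard := Nat.cast_nonneg _
    linarith
  push_neg at hm0
  have hex : ∀ k ∈ Finset.Icc (1:ℤ) m, ∃ τ ∈ Set.Ioo (0:ℝ) T, φ τ = k * Real.pi := by
    intro k hk
    rw [Finset.mem_Icc] at hk
    have h1 : φ 0 < (k : ℝ) * Real.pi := by
      rw [hφ0]
      have : (1:ℝ) ≤ (k:ℝ) := by exact_mod_cast hk.1
      nlinarith
    have h2 : (k : ℝ) * Real.pi < φ T := by
      have hkm : (k : ℝ) ≤ m := by exact_mod_cast hk.2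
      have : (m : ℝ) * Real.pi < φ T := by
        rw [lt_div_iff₀ hπ] at hub; linarith
      nlinarith
    have := intermediate_value_Ioo (le_of_lt hT) hφc.continuousOn
      (Set.mem_Ioo.mpr ⟨h1, h2⟩)
    obtain ⟨τ, hτ1, hτ2⟩ := this
    exact ⟨τ, hτ1, hτ2⟩
  choose! g hg1 hg2 using hex
  have hcard : (Finset.Icc (1:ℤ) m).card ≤ hfin.toFinset.card := by
    apply Finset.card_le_card_of_injOn g
    · intro k hk
      rw [Finset.mem_coe, Set.Finite.mem_toFinset]
      exact hmem _ (hg1 k hk).1 (hg1 k hk).2 ⟨k, hg2 k hk⟩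
    · intro k hk l hl hkl
      have : (k : ℝ) * Real.pi = (l : ℝ) * Real.pi := by
        rw [← hg2 k hk, hkl, hg2 l hl]
      have := mul_right_cancel₀ (ne_of_gt hπ) this
      exact_mod_cast this
  have hcard' : (Finset.Icc (1:ℤ) m).card = m.toNat := by
    rw [Int.card_Icc]
    congr 1
    omega
  have hncard : S.ncard = hfin.toFinset.card := Set.ncard_eq_toFinset_card S hfin
  have final : (m : ℝ) ≤ (S.ncard : ℝ) := by
    rw [hncard]
    have htn : (m.toNat : ℝ) = (m : ℝ) := by
      exact_mod_cast Int.toNat_of_nonneg (le_of_lt hm0)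
    rw [← htn]
    exact_mod_cast hcard' ▸ hcard
  linarith
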